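/- For every set function ξ on N and every subset S ⊆ N, the Fourier transform satisfies ξ̂(S) = (−1)^{|S|} Σ_{K : S ⊆ K ⊆ N} (1/2^{|K|}) m^ξ(K), where m^ξ is the Möbius transform of ξ. -/

import Mathlib

open MeasureTheory Finset

/-- The uniform probability measure on the unit cube `[0,1]^n`. -/
noncomputable def unifCube (n : ℕ) : Measure (Fin n → ℝ) :=
  Measure.pi fun _ => volume.restrict (Set.Icc 0 1)

/-- The Möbius transform of a set function. -/
noncomputable def mobius {n : ℕ} (ξ : Finset (Fin n) → ℝ) (S : Finset (Fin n)) : ℝ :=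
  ∑ T ∈ S.powerset, (-1 : ℝ) ^ (S \ T).card * ξ T

/-- The Fourier transform of a set function. -/
noncomputable def fourierT {n : ℕ} (ξ : Finset (Fin n) → ℝ) (S : Finset (Fin n)) : ℝ :=
  (1 / 2 ^ n : ℝ) * ∑ T : Finset (Fin n), (-1 : ℝ) ^ (S ∩ T).card * ξ T

/-- The Banzhaf interaction transform of a set function. -/
noncomputable def banzhaf {n : ℕ} (ξ : Finset (Fin n) → ℝ) (S : Finset (Fin n)) : ℝ :=
  (1 / 2 : ℝ) ^ (n - S.card) * ∑ K : Finset (Fin n), (-1 : ℝ) ^ (S \ K).card * ξ K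

/-- The multilinear (Owen) extension associated with coefficients `m`. -/
noncomputable def fOw {n : ℕ} (m : Finset (Fin n) → ℝ) (x : Fin n → ℝ) : ℝ :=
  ∑ T : Finset (Fin n), m T * ∏ i ∈ T, x i

/-- A capacity: vanishes on the empty set and is monotone. -/
def Capacity {n : ℕ} (μ : Finset (Fin n) → ℝ) : Prop :=
  μ ∅ = 0 ∧ ∀ S T : Finset (Fin n), S ⊆ T → μ S ≤ μ T

/-- The ANOVA component of `f` associated with the subset `S`. -/
noncomputable def anova {n : ℕ} (f : (Fin n → ℝ) → ℝ) (S : Finset (Fin n))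
    (z : Fin n → ℝ) : ℝ :=
  ∑ T ∈ S.powerset, (-1 : ℝ) ^ (S \ T).card *
    ∫ y, f (fun i => if i ∈ T then z i else y i) ∂unifCube n

/-- The Choquet integral (Lovász extension) of a 2-additive capacity with
Möbius transform `m`. -/
noncomputable def fLo {n : ℕ} (m : Finset (Fin n) → ℝ) (z : Fin n → ℝ) : ℝ :=
  ∑ i, m {i} * z i +
    ∑ i, ∑ j ∈ Finset.univ.filter (fun j => i < j), m {i, j} * min (z i) (z j)

lemma pow_card_sum {n : ℕ} (B : Finset (Fin n)) (x : ℝ) :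
    ∑ R ∈ B.powerset, x ^ R.card = (x + 1) ^ B.card := by
  simpa using (Finset.prod_add (fun _ : Fin n => x) (fun _ => 1) B).symm

lemma coeffT {n : ℕ} (S T : Finset (Fin n)) :
    ∑ K ∈ Finset.univ.filter (fun K => S ⊆ K ∧ T ⊆ K),
      ((1 / 2 : ℝ) ^ K.card * (-1 : ℝ) ^ (K \ T).card)
      = (-1 : ℝ) ^ (S \ T).card * (1 / 2 : ℝ) ^ n := by
  set A := S ∪ T with hA
  have hfil : Finset.univ.filter (fun K : Finset (Fin n) => S ⊆ K ∧ T ⊆ K)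
      = Finset.univ.filter (fun K => A ⊆ K) := by
    ext K; simp [hA, union_subset_iff]
  rw [hfil]
  have key : ∑ K ∈ Finset.univ.filter (fun K : Finset (Fin n) => A ⊆ K),
      ((1 / 2 : ℝ) ^ K.card * (-1 : ℝ) ^ (K \ T).card)
      = ∑ R ∈ Aᶜ.powerset,
        ((1 / 2 : ℝ) ^ (A.card + R.card) * (-1 : ℝ) ^ ((S \ T).card + R.card)) := by
    refine Finset.sum_nbij' (fun K => K \ A) (fun R => A ∪ R) ?_ ?_ ?_ ?_ ?_
    · intro K hK
      simp only [mem_filter, mem_univ, true_and] at hK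
      simp only [mem_powerset]
      intro x hx
      simp only [mem_sdiff] at hx
      simp [mem_compl, hx.2]
    · intro R hR
      simp only [mem_powerset] at hR
      simp only [mem_filter, mem_univ, true_and]
      exact subset_union_left
    · intro K hK
      simp only [mem_filter, mem_univ, true_and] at hK
      show A ∪ K \ A = K
      exact Finset.union_sdiff_of_subset hK
    · intro R hR
      simp only [mem_powerset] at hR
      show (A ∪ R) \ A = R
      rw [Finset.union_sdiff_cancel_left]
      rw [Finset.disjoint_left]
      intro a ha haR
      exact absurd ha (by simpa using hR haR)
    · intro K hK
      simp only [mem_filter, mem_univ, true_and] at hK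
      have h1 : K.card = A.card + (K \ A).card := by
        rw [← Finset.card_sdiff_add_card_eq_card hK]; ring
      have hTA : T ⊆ A := subset_union_right
      have h2 : (K \ T).card = (S \ T).card + (K \ A).card := by
        have he : K \ T = (A \ T) ∪ (K \ A) := by
          ext x
          simp only [mem_sdiff, mem_union]
          constructor
          · intro ⟨hxK, hxT⟩
            by_cases hxA : x ∈ A
            · exact Or.inl ⟨hxA, hxT⟩
            · exact Or.inr ⟨hxK, hxA⟩
          · rintro (⟨hxA, hxT⟩ | ⟨hxK, hxA⟩)
            · exact ⟨hK hxA, hxT⟩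
            · exact ⟨hxK, fun h => hxA (hTA h)⟩
        have hST : A \ T = S \ T := by
          ext x; simp only [hA, mem_sdiff, mem_union]; tauto
        rw [he, hST, Finset.card_union_of_disjoint]
        rw [Finset.disjoint_left]
        intro a ha haK
        simp only [mem_sdiff] at ha haK
        exact haK.2 (by simp [hA, ha.1])
      rw [h1, h2]
  rw [key]
  have hstep : ∀ R ∈ Aᶜ.powerset,
      ((1 / 2 : ℝ) ^ (A.card + R.card) * (-1 : ℝ) ^ ((S \ T).card + R.card))
      = ((1 / 2 : ℝ) ^ A.card * (-1 : ℝ) ^ (S \ T).card) * (-(1/2) : ℝ) ^ R.card := by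
    intro R _
    have h2 : (-(1/2 : ℝ)) ^ R.card = (-1 : ℝ) ^ R.card * (1/2 : ℝ) ^ R.card :=
      neg_pow _ _
    rw [pow_add, pow_add, h2]
    ring
  rw [Finset.sum_congr rfl hstep, ← Finset.mul_sum, pow_card_sum]
  have hcc : Aᶜ.card = n - A.card := by
    simp [Finset.card_compl]
  rw [hcc]
  have hle : A.card ≤ n := by simpa using Finset.card_le_card (Finset.subset_univ A)
  have hhalf : (-(1/2 : ℝ) + 1) = 1/2 := by norm_num
  rw [hhalf, mul_comm ((1/2:ℝ)^A.card), mul_assoc, ← pow_add]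
  congr 2
  omega

theorem fourier_eq_mobius (n : ℕ) (ξ : Finset (Fin n) → ℝ) (S : Finset (Fin n)) :
    fourierT ξ S =
      (-1 : ℝ) ^ S.card *
        ∑ K ∈ Finset.univ.filter (fun K => S ⊆ K), (1 / 2 ^ K.card : ℝ) * mobius ξ K := by
  rw [fourierT, Finset.mul_sum]
  have key : ∀ T : Finset (Fin n), (1 / 2 ^ n : ℝ) * ((-1 : ℝ) ^ (S ∩ T).card * ξ T)
      = (-1 : ℝ) ^ S.card *
        ((∑ K ∈ Finset.univ.filter (fun K => S ⊆ K ∧ T ⊆ K),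
          ((1/2 : ℝ) ^ K.card * (-1 : ℝ) ^ (K \ T).card)) * ξ T) := by
    intro T
    rw [coeffT]
    have hc : (S ∩ T).card + (S \ T).card = S.card := Finset.card_inter_add_card_sdiff S T
    have hsplit : (-1 : ℝ) ^ S.card = (-1) ^ (S ∩ T).card * (-1) ^ (S \ T).card := by
      rw [← pow_add, hc]
    have h2 : ((-1 : ℝ) ^ (S \ T).card) ^ 2 = 1 := by
      rw [← pow_mul, mul_comm, pow_mul]; simp
    have h3 : (1 / 2 ^ n : ℝ) = (1/2 : ℝ) ^ n := by
      rw [one_div_pow]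
    rw [hsplit, h3]
    linear_combination (-(-1 : ℝ) ^ (S ∩ T).card * (1/2 : ℝ) ^ n * ξ T) * h2
  rw [Finset.sum_congr rfl (fun T _ => key T), ← Finset.mul_sum]
  congr 1
  have expand : ∀ T : Finset (Fin n),
      (∑ K ∈ Finset.univ.filter (fun K => S ⊆ K ∧ T ⊆ K),
        ((1/2 : ℝ) ^ K.card * (-1 : ℝ) ^ (K \ T).card)) * ξ T
      = ∑ K : Finset (Fin n),
          (if S ⊆ K ∧ T ⊆ K then (1/2 : ℝ) ^ K.card * (-1 : ℝ) ^ (K \ T).card * ξ T else 0) := by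
    intro T
    rw [Finset.sum_filter, Finset.sum_mul]
    apply Finset.sum_congr rfl
    intro K _
    split <;> simp
  rw [Finset.sum_congr rfl (fun T _ => expand T), Finset.sum_comm, Finset.sum_filter]
  apply Finset.sum_congr rfl
  intro K _
  by_cases hS : S ⊆ K
  · simp only [hS, true_and, if_true]
    rw [mobius, Finset.mul_sum, ← Finset.sum_filter]
    have hpow : Finset.univ.filter (fun T : Finset (Fin n) => T ⊆ K) = K.powerset := by
      ext T; simp
    rw [hpow]
    apply Finset.sum_congr rfl
    intro T _
    simp only [one_div, inv_pow]; ring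
  · simp [hS]
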